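/- Let w > 0 and let x₀ ≥ w be real. Define x_{n+1} = xₙ(xₙ² + 3w²)/(3xₙ² + w²). Then xₙ ≥ w for all n and xₙ → w as n → ∞; moreover there is a constant C > 0 such that |x_{n+1} − w| ≤ C|xₙ − w|³ for all n. -/

import Mathlib

open Filter

theorem one_variable_landen (w : ℝ) (hw : 0 < w) (x : ℕ → ℝ) (hx0 : w ≤ x 0)
    (hx : ∀ n, x (n + 1) = x n * (x n ^ 2 + 3 * w ^ 2) / (3 * x n ^ 2 + w ^ 2)) :
    (∀ n, w ≤ x n) ∧ Tendsto x atTop (nhds w) ∧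
      ∃ C > 0, ∀ n, |x (n + 1) - w| ≤ C * |x n - w| ^ 3 := by
  have hd : ∀ n, (0:ℝ) < 3 * x n ^ 2 + w ^ 2 := fun n => by positivity
  have key : ∀ n, x (n + 1) - w = (x n - w) ^ 3 / (3 * x n ^ 2 + w ^ 2) := by
    intro n
    rw [hx n, div_sub' (hd n).ne']
    rw [div_eq_div_iff (hd n).ne' (hd n).ne']
    ring
  have hge : ∀ n, w ≤ x n := by
    intro n
    induction n with
    | zero => exact hx0
    | succ n ih =>
      have h1 : 0 ≤ x n - w := sub_nonneg.mpr ih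
      have : 0 ≤ x (n + 1) - w := by
        rw [key n]
        positivity
      linarith
  have hcon : ∀ n, x (n + 1) - w ≤ (1/3) * (x n - w) := by
    intro n
    rw [key n, div_le_iff₀ (hd n)]
    have h1 : 0 ≤ x n - w := sub_nonneg.mpr (hge n)
    nlinarith [mul_nonneg h1 (sq_nonneg w), mul_nonneg (mul_nonneg h1 h1) (mul_nonneg h1 hw.le),
      mul_nonneg h1 (mul_nonneg h1 hw.le)]
  have hbound : ∀ n, x n - w ≤ (1/3 : ℝ) ^ n * (x 0 - w) := by
    intro n
    induction n with
    | zero => simp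
    | succ n ih =>
      calc x (n + 1) - w ≤ (1/3) * (x n - w) := hcon n
        _ ≤ (1/3) * ((1/3 : ℝ) ^ n * (x 0 - w)) := by linarith
        _ = (1/3 : ℝ) ^ (n + 1) * (x 0 - w) := by ring
  have htend0 : Tendsto (fun n => x n - w) atTop (nhds 0) := by
    have h3 : Tendsto (fun n => (1/3 : ℝ) ^ n * (x 0 - w)) atTop (nhds 0) := by
      have := tendsto_pow_atTop_nhds_zero_of_lt_one (by norm_num : (0:ℝ) ≤ 1/3)
        (by norm_num : (1/3:ℝ) < 1)
      simpa using this.mul_const (x 0 - w)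
    exact squeeze_zero (fun n => sub_nonneg.mpr (hge n)) hbound h3
  refine ⟨hge, ?_, 1 / (4 * w ^ 2), by positivity, ?_⟩
  · have := htend0.add (tendsto_const_nhds (x := w))
    simpa using this
  · intro n
    have h1 : 0 ≤ x n - w := sub_nonneg.mpr (hge n)
    have h2 : 0 ≤ x (n + 1) - w := sub_nonneg.mpr (hge (n + 1))
    rw [abs_of_nonneg h2, abs_of_nonneg h1, key n]
    have h3 : 4 * w ^ 2 ≤ 3 * x n ^ 2 + w ^ 2 := by nlinarith [hge n]
    have h4 : 0 ≤ (x n - w) ^ 3 := by positivity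
    calc (x n - w) ^ 3 / (3 * x n ^ 2 + w ^ 2)
        ≤ (x n - w) ^ 3 / (4 * w ^ 2) :=
          div_le_div_of_nonneg_left h4 (by positivity) h3
      _ = 1 / (4 * w ^ 2) * (x n - w) ^ 3 := by ring
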